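/- arXiv:1306.1155 — 4 statements merged into one kernel-verified Lean document; each statement's English description precedes it below -/
import Mathlib

section
/- Let X be a closed subspace of c₀ and let Y be a strictly convex Banach space. Then every norm-attaining bounded linear operator T : X → Y has finite rank. -/
open scoped ZeroAtInfty

/-- If `X` is a closed subspace of `c₀` (encoded as a Banach space that embeds
linearly isometrically into `c₀`, hence with closed range) and `Y` is a strictly convex Banach
space, then every norm-attaining bounded linear operator `T : X → Y` has finite rank. -/
theorem stmt_0
    (X : Type*) [NormedAddCommGroup X] [NormedSpace ℝ X] [CompleteSpace X]
    (ι : X →ₗᵢ[ℝ] C₀(ℕ, ℝ)) (hclosed : IsClosed (Set.range ι))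
    (Y : Type*) [NormedAddCommGroup Y] [NormedSpace ℝ Y] [CompleteSpace Y]
    (hY : ∀ y z : Y, ‖y‖ = 1 → ‖y + z‖ ≤ 1 → ‖y - z‖ ≤ 1 → z = 0)
    (T : X →L[ℝ] Y)
    (hT : ∃ x : X, ‖x‖ = 1 ∧ ‖T x‖ = ‖T‖) :
    FiniteDimensional ℝ (LinearMap.range (T : X →ₗ[ℝ] Y)) := by
  obtain ⟨x, hx1, hxT⟩ := hT
  by_cases hT0 : T = 0
  · have : LinearMap.range (T : X →ₗ[ℝ] Y) = ⊥ := by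
      rw [hT0]; ext y; simp [eq_comm]
    rw [this]; infer_instance
  have hTpos : 0 < ‖T‖ := by
    rcases lt_or_eq_of_le (norm_nonneg T) with h | h
    · exact h
    · exact absurd (ContinuousLinearMap.opNorm_zero_iff T |>.mp h.symm) hT0
  -- find N beyond which |ι x n| < 1/2
  have hz : Filter.Tendsto (ι x) Filter.atTop (nhds 0) := by
    have := zero_at_infty (ι x)
    rwa [cocompact_eq_atTop (α := ℕ)] at this
  have hev : ∀ᶠ n in Filter.atTop, ‖ι x n‖ < 1/2 :=
    NormedAddCommGroup.tendsto_nhds_zero.mp hz (1/2) (by norm_num)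
  obtain ⟨N, hN⟩ := Filter.eventually_atTop.mp hev
  -- the finite-codimension projection
  let φ : X →ₗ[ℝ] (Fin N → ℝ) :=
    { toFun := fun v i => ι v (i : ℕ)
      map_add' := by intro a b; ext i; simp
      map_smul' := by intro c a; ext i; simp }
  have hxnorm : ‖ι x‖ = 1 := by rw [ι.norm_map]; exact hx1
  -- key: ker φ ≤ ker T
  have hker : LinearMap.ker φ ≤ LinearMap.ker (T : X →ₗ[ℝ] Y) := by
    intro v hv
    have hv' : ∀ i : Fin N, ι v (i : ℕ) = 0 := fun i => congrFun hv i
    by_cases hv0 : v = 0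
    · simp [hv0]
    have hnv : (0:ℝ) < ‖v‖ := norm_pos_iff.mpr hv0
    set c : ℝ := 1 / (2 * ‖v‖) with hc
    have hcpos : 0 < c := by positivity
    set w : X := c • v with hw
    have hwnorm : ‖w‖ = 1/2 := by
      rw [hw, norm_smul, Real.norm_eq_abs, abs_of_pos hcpos, hc]
      field_simp
    have hwi : ∀ n : ℕ, n < N → ι w n = 0 := by
      intro n hn
      have : ι w = c • ι v := by rw [hw, map_smul]
      rw [this]
      have := hv' ⟨n, hn⟩
      simp [this]
    -- pointwise bounds give ‖x ± w‖ ≤ 1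
    have hpm : ∀ s : ℝ, |s| = 1 → ‖x + s • w‖ ≤ 1 := by
      intro s hs
      rw [← ι.norm_map, ← ZeroAtInftyContinuousMap.norm_toBCF_eq_norm]
      refine (BoundedContinuousFunction.norm_le (by norm_num)).mpr ?_
      intro n
      have happ : (ι (x + s • w)).toBCF n = ι x n + s * ι w n := by
        simp [map_add, map_smul]
      rw [happ]
      by_cases hn : n < N
      · rw [hwi n hn]
        simp only [mul_zero, add_zero]
        calc ‖ι x n‖ ≤ ‖ι x‖ := by
              rw [← ZeroAtInftyContinuousMap.norm_toBCF_eq_norm]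
              exact (ι x).toBCF.norm_coe_le_norm n
          _ = 1 := hxnorm
      · push_neg at hn
        have h1 : ‖ι x n‖ < 1/2 := hN n hn
        have h2 : ‖s * ι w n‖ ≤ 1/2 := by
          rw [norm_mul, Real.norm_eq_abs s, hs, one_mul]
          calc ‖ι w n‖ ≤ ‖ι w‖ := by
                rw [← ZeroAtInftyContinuousMap.norm_toBCF_eq_norm]
                exact (ι w).toBCF.norm_coe_le_norm n
            _ = 1/2 := by rw [ι.norm_map]; exact hwnorm
        calc ‖ι x n + s * ι w n‖ ≤ ‖ι x n‖ + ‖s * ι w n‖ := norm_add_le _ _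
          _ ≤ 1/2 + 1/2 := by linarith
          _ = 1 := by norm_num
    have hplus : ‖x + w‖ ≤ 1 := by
      have := hpm 1 (by norm_num)
      simpa using this
    have hminus : ‖x - w‖ ≤ 1 := by
      have := hpm (-1) (by norm_num)
      simpa [sub_eq_add_neg] using this
    -- strict convexity
    have hTw : T w = 0 := by
      set y : Y := ‖T‖⁻¹ • T x with hy
      set z : Y := ‖T‖⁻¹ • T w with hz'
      have hy1 : ‖y‖ = 1 := by
        rw [hy, norm_smul, norm_inv, norm_norm, hxT]
        field_simp
      have hyz1 : ‖y + z‖ ≤ 1 := by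
        rw [hy, hz', ← smul_add, norm_smul, norm_inv, norm_norm, ← map_add]
        calc ‖T‖⁻¹ * ‖T (x + w)‖ ≤ ‖T‖⁻¹ * (‖T‖ * ‖x + w‖) := by
              apply mul_le_mul_of_nonneg_left (T.le_opNorm _) (by positivity)
          _ = ‖x + w‖ := by field_simp
          _ ≤ 1 := hplus
      have hyz2 : ‖y - z‖ ≤ 1 := by
        rw [hy, hz', ← smul_sub, norm_smul, norm_inv, norm_norm, ← map_sub]
        calc ‖T‖⁻¹ * ‖T (x - w)‖ ≤ ‖T‖⁻¹ * (‖T‖ * ‖x - w‖) := by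
              apply mul_le_mul_of_nonneg_left (T.le_opNorm _) (by positivity)
          _ = ‖x - w‖ := by field_simp
          _ ≤ 1 := hminus
      have := hY y z hy1 hyz1 hyz2
      rw [hz'] at this
      rcases smul_eq_zero.mp this with h | h
      · exact absurd h (inv_ne_zero (ne_of_gt hTpos))
      · exact h
    have : T v = 0 := by
      have : T w = c • T v := by rw [hw, map_smul]
      rw [hTw] at this
      rcases smul_eq_zero.mp this.symm with h | h
      · exact absurd h (ne_of_gt hcpos)
      · exact h
    simpa [LinearMap.mem_ker] using this
  -- finish: T factors through the finite-dimensional quotient X ⧸ ker φ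
  have hq : FiniteDimensional ℝ (X ⧸ LinearMap.ker φ) :=
    LinearEquiv.finiteDimensional φ.quotKerEquivRange.symm
  have hrange : LinearMap.range (T : X →ₗ[ℝ] Y) = LinearMap.range
      ((LinearMap.ker φ).liftQ (T : X →ₗ[ℝ] Y) hker) := by
    rw [Submodule.range_liftQ]
  rw [hrange]
  infer_instance
end

section
/- Let X and Y be Banach spaces, Z = X ⊕∞ Y, T₀ : X → Y a bounded linear operator with ‖T₀‖ = 1, S₀ : Z → Z defined by S₀(x,y) = (0, T₀ x), and let 0 < ε < 1/2. If there exists a norm-attaining bounded linear operator S : Z → Z with ‖S₀ − S‖ < ε, then there exists a norm-attaining bounded linear operator T : X → Y with ‖T₀ − T‖ < ε. -/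
/-- With `Z = X ⊕∞ Y`, `‖T₀‖ = 1`, `S₀ (x, y) = (0, T₀ x)` and `0 < ε < 1/2`:
if a norm-attaining operator `S : Z → Z` satisfies `‖S₀ - S‖ < ε`, then there is a
norm-attaining operator `T : X → Y` with `‖T₀ - T‖ < ε`. -/
theorem stmt_5
    (X : Type*) [NormedAddCommGroup X] [NormedSpace ℝ X] [CompleteSpace X]
    (Y : Type*) [NormedAddCommGroup Y] [NormedSpace ℝ Y] [CompleteSpace Y]
    (T₀ : X →L[ℝ] Y) (hT₀ : ‖T₀‖ = 1)
    (S₀ : X × Y →L[ℝ] X × Y) (hS₀ : ∀ x : X, ∀ y : Y, S₀ (x, y) = (0, T₀ x))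
    (ε : ℝ) (hε₀ : 0 < ε) (hε₁ : ε < 1 / 2)
    (S : X × Y →L[ℝ] X × Y) (hSna : ∃ u : X × Y, ‖u‖ = 1 ∧ ‖S u‖ = ‖S‖)
    (hSS₀ : ‖S₀ - S‖ < ε) :
    ∃ T : X →L[ℝ] Y, (∃ x : X, ‖x‖ = 1 ∧ ‖T x‖ = ‖T‖) ∧ ‖T₀ - T‖ < ε := by
  obtain ⟨u, hu1, huS⟩ := hSna
  set x₀ := u.1 with hx₀def
  set y₀ := u.2 with hy₀def
  have hu : u = (x₀, y₀) := rfl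
  have hx₀le : ‖x₀‖ ≤ 1 := by rw [← hu1]; exact norm_fst_le u
  have hy₀le : ‖y₀‖ ≤ 1 := by rw [← hu1]; exact norm_snd_le u
  -- ‖S₀‖ ≥ 1
  have hS₀ge : (1 : ℝ) ≤ ‖S₀‖ := by
    rw [← hT₀]
    apply ContinuousLinearMap.opNorm_le_bound _ (norm_nonneg S₀)
    intro x
    have h1 : ‖T₀ x‖ = ‖S₀ (x, 0)‖ := by
      rw [hS₀ x 0]; simp [Prod.norm_def]
    have h2 : ‖S₀ ((x : X), (0 : Y))‖ ≤ ‖S₀‖ * ‖((x : X), (0 : Y))‖ := S₀.le_opNorm _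
    have h3 : ‖((x : X), (0 : Y))‖ = ‖x‖ := by simp [Prod.norm_def]
    rw [h1, ← h3]; exact h2
  have hSge : 1 - ε < ‖S‖ := by
    have := norm_sub_norm_le S₀ S
    linarith
  have hεS : ε < ‖S‖ := by linarith
  set b := (S u).2 with hbdef
  set c := (S ((0 : X), y₀)).2 with hcdef
  have hdiff : ‖S₀ u - S u‖ ≤ ε := by
    have h1 : ‖(S₀ - S) u‖ ≤ ‖S₀ - S‖ * ‖u‖ := (S₀ - S).le_opNorm u
    rw [hu1, mul_one] at h1
    rw [← ContinuousLinearMap.sub_apply]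
    linarith
  have hS₀u : S₀ u = (0, T₀ x₀) := by rw [hu]; exact hS₀ x₀ y₀
  have ha : ‖(S u).1‖ ≤ ε := by
    have h1 : ‖(S₀ u - S u).1‖ ≤ ‖S₀ u - S u‖ := norm_fst_le _
    have h2 : (S₀ u - S u).1 = -(S u).1 := by rw [hS₀u]; simp
    rw [h2, norm_neg] at h1
    linarith
  have hbT : ‖T₀ x₀ - b‖ ≤ ε := by
    have h1 : ‖(S₀ u - S u).2‖ ≤ ‖S₀ u - S u‖ := norm_snd_le _
    have h2 : (S₀ u - S u).2 = T₀ x₀ - b := by rw [hS₀u]; simp [hbdef]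
    rw [h2] at h1
    linarith
  have hb : ‖b‖ = ‖S‖ := by
    have h1 : ‖S u‖ = max ‖(S u).1‖ ‖(S u).2‖ := rfl
    rw [huS] at h1
    rcases max_cases ‖(S u).1‖ ‖(S u).2‖ with ⟨he, _⟩ | ⟨he, _⟩
    · rw [he] at h1; linarith
    · rw [he] at h1; exact h1.symm
  have hc : ‖c‖ ≤ ε := by
    have h1 : S₀ ((0 : X), y₀) = (0, 0) := by rw [hS₀ 0 y₀]; simp
    have h2 : ‖(S₀ - S) ((0 : X), y₀)‖ ≤ ‖S₀ - S‖ * ‖((0 : X), y₀)‖ :=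
      (S₀ - S).le_opNorm _
    have h3 : ‖((0 : X), y₀)‖ = ‖y₀‖ := by simp [Prod.norm_def]
    have h4 : (S₀ - S) ((0 : X), y₀) = -(S ((0 : X), y₀)) := by
      rw [ContinuousLinearMap.sub_apply, h1]; simp
    rw [h4, norm_neg, h3] at h2
    have h5 : ‖c‖ ≤ ‖S ((0 : X), y₀)‖ := norm_snd_le _
    nlinarith [norm_nonneg y₀, norm_nonneg (S₀ - S)]
  have hTx₀pos : 0 < ‖T₀ x₀‖ := by
    have h1 : ‖b‖ - ‖T₀ x₀‖ ≤ ‖b - T₀ x₀‖ := norm_sub_norm_le _ _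
    have h2 : ‖b - T₀ x₀‖ ≤ ε := by rw [← norm_neg, neg_sub]; exact hbT
    rw [hb] at h1
    linarith
  have hx₀pos : 0 < ‖x₀‖ := by
    rcases eq_or_ne x₀ 0 with h | h
    · rw [h] at hTx₀pos; simp at hTx₀pos
    · exact norm_pos_iff.mpr h
  -- key claim: ‖x₀‖ = 1
  have hx₀1 : ‖x₀‖ = 1 := by
    by_contra h
    have hlt : ‖x₀‖ < 1 := lt_of_le_of_ne hx₀le h
    set t := ‖x₀‖⁻¹ with htdef
    have ht0 : 0 < t := inv_pos.mpr hx₀pos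
    have ht1 : 1 < t := by rw [htdef]; exact one_lt_inv₀ hx₀pos |>.mpr hlt
    set v : X × Y := (t • x₀, y₀) with hvdef
    have hvnorm : ‖v‖ = 1 := by
      have h1 : ‖t • x₀‖ = 1 := by
        rw [norm_smul, Real.norm_eq_abs, abs_of_pos ht0, htdef,
          inv_mul_cancel₀ (ne_of_gt hx₀pos)]
      have h2 : ‖v‖ = max ‖t • x₀‖ ‖y₀‖ := rfl
      rw [h2, h1, max_eq_left hy₀le]
    have hSvle : ‖S v‖ ≤ ‖S‖ := by
      have := S.le_opNorm v
      rw [hvnorm, mul_one] at this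
      exact this
    have hdecomp : v = t • ((x₀, (0 : Y)) : X × Y) + ((0 : X), y₀) := by
      rw [hvdef]; simp [Prod.ext_iff]
    have hu' : u = ((x₀, (0 : Y)) : X × Y) + ((0 : X), y₀) := by
      rw [hu]; simp [Prod.ext_iff]
    have hSv2 : (S v).2 = t • b - (t - 1) • c := by
      have h1 : S ((x₀, (0 : Y)) : X × Y) = S u - S ((0 : X), y₀) := by
        rw [hu', map_add]; abel
      have h2 : S v = t • (S u - S ((0 : X), y₀)) + S ((0 : X), y₀) := by
        rw [hdecomp, map_add, map_smul, h1]
      have h3 : (S v).2 = t • (b - c) + c := by rw [h2]; rfl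
      rw [h3, smul_sub, sub_smul, one_smul]; abel
    have hlow : t * ‖S‖ - (t - 1) * ε ≤ ‖(S v).2‖ := by
      have h1 : ‖t • b‖ - ‖(t - 1) • c‖ ≤ ‖t • b - (t - 1) • c‖ := norm_sub_norm_le _ _
      rw [norm_smul, norm_smul, Real.norm_eq_abs, Real.norm_eq_abs,
        abs_of_pos ht0, abs_of_pos (by linarith : (0 : ℝ) < t - 1), hb] at h1
      rw [hSv2]
      have h2 : (t - 1) * ‖c‖ ≤ (t - 1) * ε :=
        mul_le_mul_of_nonneg_left hc (by linarith)
      linarith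
    have hcontr : ‖(S v).2‖ ≤ ‖S‖ := le_trans (norm_snd_le _) hSvle
    have h3 : 0 < (t - 1) * (‖S‖ - ε) := mul_pos (by linarith) (by linarith)
    have h4 : t * ‖S‖ - (t - 1) * ε ≤ ‖S‖ := le_trans hlow hcontr
    have h5 : t * ‖S‖ - t * ε - ‖S‖ + ε = (t - 1) * (‖S‖ - ε) := by ring
    have h6 : (t - 1) * ε = t * ε - ε := by ring
    linarith
  -- Hahn-Banach functional at x₀
  obtain ⟨g, hg1, hgx₀⟩ := exists_dual_vector ℝ x₀ (ne_of_gt hx₀pos)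
  have hgx : g x₀ = 1 := by rw [hgx₀, hx₀1]; norm_num
  set J : X →L[ℝ] X × Y := (ContinuousLinearMap.id ℝ X).prod (g.smulRight y₀) with hJdef
  have hJ : ∀ x : X, J x = (x, g x • y₀) := fun x => rfl
  have hJle : ∀ x : X, ‖J x‖ ≤ ‖x‖ := by
    intro x
    have h1 : ‖J x‖ = max ‖x‖ ‖g x • y₀‖ := rfl
    rw [h1]
    apply max_le le_rfl
    rw [norm_smul]
    have h2 : ‖g x‖ ≤ ‖x‖ := by
      have := g.le_opNorm x
      rw [hg1, one_mul] at this
      exact this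
    have h3 : ‖g x‖ * ‖y₀‖ ≤ ‖x‖ * 1 :=
      mul_le_mul h2 hy₀le (norm_nonneg y₀) (norm_nonneg x)
    linarith
  set T : X →L[ℝ] Y := (ContinuousLinearMap.snd ℝ X Y).comp (S.comp J) with hTdef
  have hTx : ∀ x : X, T x = (S (J x)).2 := fun x => rfl
  have hTle : ‖T‖ ≤ ‖S‖ := by
    apply ContinuousLinearMap.opNorm_le_bound _ (norm_nonneg S)
    intro x
    calc ‖T x‖ = ‖(S (J x)).2‖ := by rw [hTx]
      _ ≤ ‖S (J x)‖ := norm_snd_le _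
      _ ≤ ‖S‖ * ‖J x‖ := S.le_opNorm _
      _ ≤ ‖S‖ * ‖x‖ := by
          exact mul_le_mul_of_nonneg_left (hJle x) (norm_nonneg S)
  have hTx₀ : T x₀ = b := by
    rw [hTx]
    have h1 : J x₀ = u := by rw [hJ, hgx, one_smul, hu]
    rw [h1]
  have hTnorm : ‖T‖ = ‖S‖ := by
    apply le_antisymm hTle
    have h1 : ‖T x₀‖ ≤ ‖T‖ * ‖x₀‖ := T.le_opNorm x₀
    rw [hTx₀, hb, hx₀1, mul_one] at h1
    exact h1
  refine ⟨T, ⟨x₀, hx₀1, by rw [hTx₀, hb, hTnorm]⟩, ?_⟩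
  have hfinal : ‖T₀ - T‖ ≤ ‖S₀ - S‖ := by
    apply ContinuousLinearMap.opNorm_le_bound _ (norm_nonneg _)
    intro x
    have h1 : (T₀ - T) x = ((S₀ - S) (J x)).2 := by
      rw [ContinuousLinearMap.sub_apply, ContinuousLinearMap.sub_apply, hTx]
      have h2 : S₀ (J x) = (0, T₀ x) := by rw [hJ]; exact hS₀ x _
      rw [h2, Prod.snd_sub]
    calc ‖(T₀ - T) x‖ = ‖((S₀ - S) (J x)).2‖ := by rw [h1]
      _ ≤ ‖(S₀ - S) (J x)‖ := norm_snd_le _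
      _ ≤ ‖S₀ - S‖ * ‖J x‖ := (S₀ - S).le_opNorm _
      _ ≤ ‖S₀ - S‖ * ‖x‖ := mul_le_mul_of_nonneg_left (hJle x) (norm_nonneg _)
  linarith
end

section
/- Let X and Y be Banach spaces and suppose there is a compact operator T₀ : X → Y with ‖T₀‖ = 1 that cannot be approximated in operator norm by norm-attaining operators. Then with Z = X ⊕∞ Y, the compact operator S₀ : Z → Z given by S₀(x,y) = (0, T₀ x) cannot be approximated in operator norm by norm-attaining operators. -/
set_option maxHeartbeats 1000000

/-- If a compact operator `T₀ : X → Y` with `‖T₀‖ = 1` is not in the closure of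
the norm-attaining operators, then the compact operator `S₀ : X ⊕∞ Y → X ⊕∞ Y`,
`S₀ (x, y) = (0, T₀ x)`, is not in the closure of the norm-attaining operators either. -/
theorem stmt_6
    (X : Type*) [NormedAddCommGroup X] [NormedSpace ℝ X] [CompleteSpace X]
    (Y : Type*) [NormedAddCommGroup Y] [NormedSpace ℝ Y] [CompleteSpace Y]
    (T₀ : X →L[ℝ] Y) (hT₀c : IsCompactOperator T₀) (hT₀ : ‖T₀‖ = 1)
    (hT₀na : T₀ ∉ closure {T : X →L[ℝ] Y | ∃ x : X, ‖x‖ = 1 ∧ ‖T x‖ = ‖T‖})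
    (S₀ : X × Y →L[ℝ] X × Y) (hS₀ : ∀ x : X, ∀ y : Y, S₀ (x, y) = (0, T₀ x)) :
    IsCompactOperator S₀ ∧
      S₀ ∉ closure {S : X × Y →L[ℝ] X × Y | ∃ u : X × Y, ‖u‖ = 1 ∧ ‖S u‖ = ‖S‖} := by
  have hS₀app : ∀ u : X × Y, S₀ u = (0, T₀ u.1) := fun u => by
    have := hS₀ u.1 u.2
    rwa [Prod.mk.eta] at this
  -- compactness
  have hcomp : IsCompactOperator S₀ := by
    have h1 : IsCompactOperator (⇑T₀ ∘ ⇑(ContinuousLinearMap.fst ℝ X Y)) :=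
      hT₀c.comp_clm _
    have h2 := h1.clm_comp (ContinuousLinearMap.inr ℝ X Y)
    have heq : ⇑S₀ = ⇑(ContinuousLinearMap.inr ℝ X Y) ∘ ⇑T₀ ∘
        ⇑(ContinuousLinearMap.fst ℝ X Y) := by
      funext u
      simp [hS₀app u]
    rw [heq]
    exact h2
  refine ⟨hcomp, ?_⟩
  -- norm of S₀
  have hS₀le : ‖S₀‖ ≤ 1 := by
    refine ContinuousLinearMap.opNorm_le_bound _ zero_le_one fun u => ?_
    rw [hS₀app u, one_mul]
    have h1 : ‖((0 : X), T₀ u.1)‖ = ‖T₀ u.1‖ := by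
      simp [Prod.norm_def, norm_nonneg]
    rw [h1]
    calc ‖T₀ u.1‖ ≤ ‖T₀‖ * ‖u.1‖ := T₀.le_opNorm _
      _ ≤ 1 * ‖u‖ := by
          rw [hT₀, one_mul, one_mul]; exact norm_fst_le u
      _ = ‖u‖ := one_mul _
  have hS₀ge : (1 : ℝ) ≤ ‖S₀‖ := by
    rw [← hT₀]
    refine ContinuousLinearMap.opNorm_le_bound _ (norm_nonneg S₀) fun x => ?_
    have h1 : ‖S₀ (x, 0)‖ = ‖T₀ x‖ := by
      rw [hS₀ x 0]; simp [Prod.norm_def, norm_nonneg]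
    have h2 : ‖((x : X), (0 : Y))‖ = ‖x‖ := by
      simp [Prod.norm_def, norm_nonneg]
    calc ‖T₀ x‖ = ‖S₀ (x, 0)‖ := h1.symm
      _ ≤ ‖S₀‖ * ‖((x : X), (0 : Y))‖ := S₀.le_opNorm _
      _ = ‖S₀‖ * ‖x‖ := by rw [h2]
  have hS₀norm : ‖S₀‖ = 1 := le_antisymm hS₀le hS₀ge
  -- main part
  intro hmem
  apply hT₀na
  rw [Metric.mem_closure_iff]
  intro δ hδ
  set ε : ℝ := min (δ / 3) (1 / 8) with hε_def
  have hε : 0 < ε := lt_min (by linarith) (by norm_num)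
  have hεδ : ε ≤ δ / 3 := min_le_left _ _
  have hε8 : ε ≤ 1 / 8 := min_le_right _ _
  rw [Metric.mem_closure_iff] at hmem
  obtain ⟨S, hSna, hSd⟩ := hmem ε hε
  obtain ⟨u, hu1, hu2⟩ := hSna
  rw [dist_eq_norm] at hSd
  -- basic norm estimates
  have hx_le : ‖u.1‖ ≤ 1 := le_of_le_of_eq (norm_fst_le u) hu1
  have hy_le : ‖u.2‖ ≤ 1 := le_of_le_of_eq (norm_snd_le u) hu1
  have hSnorm : (7 : ℝ) / 8 ≤ ‖S‖ := by
    have h1 : ‖S₀‖ - ‖S‖ ≤ ‖S₀ - S‖ := norm_sub_norm_le _ _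
    rw [hS₀norm] at h1
    linarith
  -- the second component of S u has full norm
  have hfst : ‖(S u).1‖ < ε := by
    have h0 : (S₀ u).1 = 0 := by rw [hS₀app u]
    have h1 : (S u).1 = -((S₀ - S) u).1 := by
      simp [ContinuousLinearMap.sub_apply, h0]
    rw [h1, norm_neg]
    calc ‖((S₀ - S) u).1‖ ≤ ‖(S₀ - S) u‖ := norm_fst_le _
      _ ≤ ‖S₀ - S‖ * ‖u‖ := (S₀ - S).le_opNorm u
      _ = ‖S₀ - S‖ := by rw [hu1, mul_one]
      _ < ε := hSd
  have hsnd : ‖(S u).2‖ = ‖S‖ := by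
    have hmax : max ‖(S u).1‖ ‖(S u).2‖ = ‖S‖ := by
      rw [← Prod.norm_def]; exact hu2
    rcases max_choice ‖(S u).1‖ ‖(S u).2‖ with h | h
    · rw [h] at hmax; linarith
    · rw [h] at hmax; exact hmax
  -- lower bound on ‖u.1‖
  have hS0y : S₀ (0, u.2) = 0 := by
    rw [hS₀ 0 u.2]; simp
  have hSy : ‖S (0, u.2)‖ ≤ ε := by
    have h1 : S (0, u.2) = -((S₀ - S) (0, u.2)) := by
      simp [ContinuousLinearMap.sub_apply, hS0y]
    rw [h1, norm_neg]
    have h2 : ‖((0 : X), u.2)‖ ≤ 1 := by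
      rw [Prod.norm_def]; simp [hy_le]
    calc ‖(S₀ - S) (0, u.2)‖ ≤ ‖S₀ - S‖ * ‖((0 : X), u.2)‖ := (S₀ - S).le_opNorm _
      _ ≤ ε * 1 := by
          apply mul_le_mul (le_of_lt hSd) h2 (norm_nonneg _) (le_of_lt hε)
      _ = ε := mul_one ε
  have hSx : ‖S (u.1, 0)‖ ≤ ‖S‖ * ‖u.1‖ := by
    have h2 : ‖((u.1 : X), (0 : Y))‖ = ‖u.1‖ := by
      simp [Prod.norm_def, norm_nonneg]
    calc ‖S (u.1, 0)‖ ≤ ‖S‖ * ‖((u.1 : X), (0 : Y))‖ := S.le_opNorm _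
      _ = ‖S‖ * ‖u.1‖ := by rw [h2]
  have hsplit : ‖S‖ ≤ ‖S‖ * ‖u.1‖ + ε := by
    have hu_eq : u = (u.1, (0 : Y)) + ((0 : X), u.2) := by
      ext <;> simp
    have h1 : S u = S (u.1, 0) + S (0, u.2) := by
      conv_lhs => rw [hu_eq]
      exact map_add S _ _
    calc ‖S‖ = ‖S u‖ := hu2.symm
      _ = ‖S (u.1, 0) + S (0, u.2)‖ := by rw [h1]
      _ ≤ ‖S (u.1, 0)‖ + ‖S (0, u.2)‖ := norm_add_le _ _
      _ ≤ ‖S‖ * ‖u.1‖ + ε := add_le_add hSx hSy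
  have hx_ge : (2 : ℝ) / 3 ≤ ‖u.1‖ := by nlinarith [norm_nonneg u.1]
  have hx_pos : (0 : ℝ) < ‖u.1‖ := by linarith
  have hx_ne : u.1 ≠ 0 := by
    intro h; rw [h, norm_zero] at hx_pos; exact lt_irrefl _ hx_pos
  -- norming functional
  obtain ⟨f, hf1, hf2⟩ := exists_dual_vector ℝ u.1 (norm_ne_zero_iff.mpr hx_ne)
  set c : ℝ := ‖u.1‖⁻¹ with hc_def
  have hc_pos : 0 < c := inv_pos.2 hx_pos
  have hc_mul : c * ‖u.1‖ = 1 := inv_mul_cancel₀ (ne_of_gt hx_pos)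
  have hc_ge : (1 : ℝ) ≤ c := by nlinarith
  have hc_le : c ≤ 3 / 2 := by
    rw [hc_def]
    have : (2 : ℝ) / 3 > 0 := by norm_num
    calc ‖u.1‖⁻¹ ≤ ((2 : ℝ) / 3)⁻¹ := by
          apply inv_anti₀ this hx_ge
      _ = 3 / 2 := by norm_num
  -- the auxiliary map L
  set L : X →L[ℝ] X × Y :=
    (ContinuousLinearMap.id ℝ X).prod ((c • f).smulRight u.2) with hL_def
  have hL_apply : ∀ x' : X, L x' = (x', (c * f x') • u.2) := fun x' => by
    simp [hL_def, ContinuousLinearMap.prod_apply, ContinuousLinearMap.smulRight_apply,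
      ContinuousLinearMap.smul_apply, smul_eq_mul]
  have hLu : L u.1 = u := by
    rw [hL_apply]
    have h1 : (c * f u.1) = 1 := by
      rw [hf2]; exact hc_mul
    rw [h1, one_smul]
  have hL_norm : ∀ x' : X, ‖L x'‖ ≤ c * ‖x'‖ := fun x' => by
    rw [hL_apply]
    rw [Prod.norm_def]
    apply max_le
    all_goals simp only [Prod.fst, Prod.snd]
    · nlinarith [norm_nonneg x']
    · rw [norm_smul]
      have h1 : ‖c * f x'‖ ≤ c * ‖x'‖ := by
        rw [norm_mul, Real.norm_eq_abs c, abs_of_pos hc_pos]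
        have : ‖f x'‖ ≤ ‖x'‖ := by
          calc ‖f x'‖ ≤ ‖f‖ * ‖x'‖ := f.le_opNorm _
            _ = ‖x'‖ := by rw [hf1, one_mul]
        exact mul_le_mul_of_nonneg_left this (le_of_lt hc_pos)
      calc ‖c * f x'‖ * ‖u.2‖ ≤ (c * ‖x'‖) * 1 :=
            mul_le_mul h1 hy_le (norm_nonneg _) (by positivity)
        _ = c * ‖x'‖ := mul_one _
  -- the norm-attaining operator T'
  set T' : X →L[ℝ] Y := (ContinuousLinearMap.snd ℝ X Y).comp (S.comp L) with hT'_def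
  have hT'_apply : ∀ x' : X, T' x' = (S (L x')).2 := fun x' => rfl
  have hT'_le : ‖T'‖ ≤ ‖S‖ * c := by
    refine ContinuousLinearMap.opNorm_le_bound _ (by positivity) fun x' => ?_
    rw [hT'_apply]
    calc ‖(S (L x')).2‖ ≤ ‖S (L x')‖ := norm_snd_le _
      _ ≤ ‖S‖ * ‖L x'‖ := S.le_opNorm _
      _ ≤ ‖S‖ * (c * ‖x'‖) :=
          mul_le_mul_of_nonneg_left (hL_norm x') (norm_nonneg S)
      _ = ‖S‖ * c * ‖x'‖ := by ring
  have hxhat_norm : ‖c • u.1‖ = 1 := by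
    rw [norm_smul, Real.norm_eq_abs, abs_of_pos hc_pos, hc_mul]
  have hT'xhat : ‖T' (c • u.1)‖ = ‖S‖ * c := by
    rw [hT'_apply, map_smul, map_smul]
    have : ((c • S (L u.1)).2 : Y) = c • (S (L u.1)).2 := rfl
    rw [this, hLu, norm_smul, Real.norm_eq_abs, abs_of_pos hc_pos, hsnd]
    ring
  have hT'_norm : ‖T'‖ = ‖S‖ * c := by
    apply le_antisymm hT'_le
    calc ‖S‖ * c = ‖T' (c • u.1)‖ := hT'xhat.symm
      _ ≤ ‖T'‖ * ‖c • u.1‖ := T'.le_opNorm _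
      _ = ‖T'‖ := by rw [hxhat_norm, mul_one]
  have hT'_na : T' ∈ {T : X →L[ℝ] Y | ∃ x : X, ‖x‖ = 1 ∧ ‖T x‖ = ‖T‖} :=
    ⟨c • u.1, hxhat_norm, by rw [hT'xhat, hT'_norm]⟩
  -- distance estimate
  have hdist : ‖T₀ - T'‖ ≤ ‖S₀ - S‖ * c := by
    refine ContinuousLinearMap.opNorm_le_bound _ (by positivity) fun x' => ?_
    have h1 : (T₀ - T') x' = ((S₀ - S) (L x')).2 := by
      have h2 : (S₀ (L x')).2 = T₀ x' := by
        rw [hS₀app (L x'), hL_apply]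
      simp [ContinuousLinearMap.sub_apply, hT'_apply, ← h2]
    rw [h1]
    calc ‖((S₀ - S) (L x')).2‖ ≤ ‖(S₀ - S) (L x')‖ := norm_snd_le _
      _ ≤ ‖S₀ - S‖ * ‖L x'‖ := (S₀ - S).le_opNorm _
      _ ≤ ‖S₀ - S‖ * (c * ‖x'‖) :=
          mul_le_mul_of_nonneg_left (hL_norm x') (norm_nonneg _)
      _ = ‖S₀ - S‖ * c * ‖x'‖ := by ring
  refine ⟨T', hT'_na, ?_⟩
  rw [dist_eq_norm]
  have h3 : ‖S₀ - S‖ * c < ε * (3 / 2) := by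
    have h4 : ‖S₀ - S‖ * c ≤ ‖S₀ - S‖ * (3 / 2) :=
      mul_le_mul_of_nonneg_left hc_le (norm_nonneg _)
    nlinarith [norm_nonneg (S₀ - S)]
  calc ‖T₀ - T'‖ ≤ ‖S₀ - S‖ * c := hdist
    _ < ε * (3 / 2) := h3
    _ ≤ (δ / 3) * (3 / 2) := by nlinarith
    _ < δ := by linarith
end

section
/- Let X be a closed subspace of complex c₀ and let Y be a complex strictly convex Banach space. Then every norm-attaining bounded complex-linear operator T : X → Y has finite rank. -/
open scoped ZeroAtInfty

/-- If `X` is a closed subspace of complex `c₀` (encoded as a complex Banach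
space embedding linearly isometrically into `C₀(ℕ, ℂ)` with closed range) and `Y` is a
complex strictly convex Banach space, then every norm-attaining bounded complex-linear
operator `T : X → Y` has finite rank. -/
theorem stmt_11
    (X : Type*) [NormedAddCommGroup X] [NormedSpace ℂ X] [CompleteSpace X]
    (ι : X →ₗᵢ[ℂ] C₀(ℕ, ℂ)) (hclosed : IsClosed (Set.range ι))
    (Y : Type*) [NormedAddCommGroup Y] [NormedSpace ℂ Y] [CompleteSpace Y]
    (hY : ∀ y z : Y, ‖y‖ = 1 → (∀ θ : ℂ, ‖θ‖ = 1 → ‖y + θ • z‖ ≤ 1) → z = 0)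
    (T : X →L[ℂ] Y)
    (hT : ∃ x : X, ‖x‖ = 1 ∧ ‖T x‖ = ‖T‖) :
    FiniteDimensional ℂ (LinearMap.range (T : X →ₗ[ℂ] Y)) := by
  rcases eq_or_ne T 0 with h0 | h0
  · have hbot : LinearMap.range (T : X →ₗ[ℂ] Y) = ⊥ := by
      ext y
      simp [h0, LinearMap.mem_range, eq_comm]
    rw [hbot]
    infer_instance
  obtain ⟨x, hx1, hxT⟩ := hT
  have hc : 0 < ‖T‖ := norm_pos_iff.mpr h0
  -- find N with coordinates of ι x small beyond N
  have htend : Filter.Tendsto (ι x) Filter.atTop (nhds 0) := by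
    have := (ι x).zero_at_infty'
    rwa [cocompact_eq_atTop] at this
  obtain ⟨N, hN⟩ := Metric.tendsto_atTop.mp htend (1/2) (by norm_num)
  -- the finite-codimension subspace
  set φ : X →ₗ[ℂ] (Fin N → ℂ) :=
    { toFun := fun z i => ι z i
      map_add' := by intro a b; funext i; simp
      map_smul' := by intro c a; funext i; simp }
  -- key: ker φ ≤ ker T
  have hker : LinearMap.ker φ ≤ LinearMap.ker (T : X →ₗ[ℂ] Y) := by
    intro z hz
    have hzero : ∀ i : ℕ, i < N → ι z i = 0 := by
      intro i hi
      have := congrFun (LinearMap.mem_ker.mp hz) ⟨i, hi⟩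
      simpa [φ] using this
    -- reduce to small z
    have key : ∀ w : X, w ∈ LinearMap.ker φ → ‖w‖ ≤ 1/2 → T w = 0 := by
      intro w hw hwn
      have hwzero : ∀ i : ℕ, i < N → ι w i = 0 := by
        intro i hi
        have := congrFun (LinearMap.mem_ker.mp hw) ⟨i, hi⟩
        simpa [φ] using this
      have hbound : ∀ θ : ℂ, ‖θ‖ = 1 → ‖x + θ • w‖ ≤ 1 := by
        intro θ hθ
        have : ‖x + θ • w‖ = ‖ι x + θ • ι w‖ := by
          rw [← ι.norm_map]; simp
        rw [this, ← ZeroAtInftyContinuousMap.norm_toBCF_eq_norm]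
        refine (BoundedContinuousFunction.norm_le (by norm_num)).mpr fun n => ?_
        rcases lt_or_ge n N with hn | hn
        · have : (ι w) n = 0 := hwzero n hn
          have hx' : ‖(ι x) n‖ ≤ 1 := by
            calc ‖(ι x) n‖ ≤ ‖(ι x).toBCF‖ := (ι x).toBCF.norm_coe_le_norm n
            _ = ‖x‖ := by rw [ZeroAtInftyContinuousMap.norm_toBCF_eq_norm, ι.norm_map]
            _ = 1 := hx1
          simpa [this] using hx'
        · have h1 : ‖(ι x) n‖ ≤ 1/2 := by
            have := hN n hn
            simpa [dist_eq_norm] using this.le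
          have h2 : ‖θ • (ι w) n‖ ≤ 1/2 := by
            rw [norm_smul]
            have : ‖(ι w) n‖ ≤ 1/2 := by
              calc ‖(ι w) n‖ ≤ ‖(ι w).toBCF‖ := (ι w).toBCF.norm_coe_le_norm n
              _ = ‖w‖ := by rw [ZeroAtInftyContinuousMap.norm_toBCF_eq_norm, ι.norm_map]
              _ ≤ 1/2 := hwn
            calc ‖θ‖ * ‖(ι w) n‖ = ‖(ι w) n‖ := by
                  rw [show ‖θ‖ = 1 from by rw [hθ], one_mul]
            _ ≤ 1/2 := this
          calc ‖((ι x + θ • ι w).toBCF) n‖ = ‖(ι x) n + θ • (ι w) n‖ := by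
                simp [BoundedContinuousFunction.coe_add]
          _ ≤ ‖(ι x) n‖ + ‖θ • (ι w) n‖ := norm_add_le _ _
          _ ≤ 1/2 + 1/2 := add_le_add h1 h2
          _ = 1 := by norm_num
      -- apply complex strict convexity
      have hy : ‖(‖T‖)⁻¹ • T x‖ = 1 := by
        rw [norm_smul, hxT, norm_inv, norm_norm, inv_mul_cancel₀ hc.ne']
      have := hY ((‖T‖)⁻¹ • T x) ((‖T‖)⁻¹ • T w) hy ?_
      · have h := smul_eq_zero.mp this
        rcases h with h | h
        · exact absurd (inv_eq_zero.mp h) hc.ne'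
        · exact h
      · intro θ hθ
        have : (‖T‖)⁻¹ • T x + θ • (‖T‖)⁻¹ • T w = (‖T‖)⁻¹ • T (x + θ • w) := by
          rw [map_add, map_smul, smul_add]
          congr 1
          rw [smul_comm]
        rw [this, norm_smul, norm_inv, norm_norm]
        calc (‖T‖)⁻¹ * ‖T (x + θ • w)‖ ≤ (‖T‖)⁻¹ * (‖T‖ * ‖x + θ • w‖) := by
              gcongr
              exact T.le_opNorm _
        _ = ‖x + θ • w‖ := by field_simp
        _ ≤ 1 := hbound θ hθ
    -- now scale general z
    rcases eq_or_ne z 0 with rfl | hz0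
    · simp
    · have hzn : (0:ℝ) < ‖z‖ := norm_pos_iff.mpr hz0
      set w := ((2 * ‖z‖ : ℝ)⁻¹ : ℂ) • z with hw
      have hwmem : w ∈ LinearMap.ker φ := Submodule.smul_mem _ _ hz
      have hwn : ‖w‖ ≤ 1/2 := by
        rw [hw, norm_smul]
        rw [norm_inv]
        have : ‖((2 * ‖z‖ : ℝ) : ℂ)‖ = 2 * ‖z‖ := by
          rw [Complex.norm_real, Real.norm_eq_abs, abs_of_pos (by positivity)]
        rw [this]
        rw [inv_mul_le_iff₀ (by positivity)]
        ring_nf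
        nlinarith
      have hTw : T w = 0 := key w hwmem hwn
      have hz2 : ((2 * ‖z‖ : ℝ) : ℂ) ≠ 0 := Complex.ofReal_ne_zero.mpr (by positivity)
      have hTz : T z = ((2 * ‖z‖ : ℝ) : ℂ) • T w := by
        rw [hw, map_smul, smul_smul, mul_inv_cancel₀ hz2, one_smul]
      simp only [LinearMap.mem_ker, ContinuousLinearMap.coe_coe]
      rw [hTz, hTw, smul_zero]
  -- finite rank from finite codimension of ker φ
  have hfin : FiniteDimensional ℂ (X ⧸ LinearMap.ker φ) := by
    have e := φ.quotKerEquivRange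
    exact Module.Finite.equiv e.symm
  haveI := hfin
  have heq : LinearMap.range (T : X →ₗ[ℂ] Y)
      = LinearMap.range ((LinearMap.ker φ).liftQ (T : X →ₗ[ℂ] Y) hker) := by
    ext y
    simp only [LinearMap.mem_range]
    constructor
    · rintro ⟨x', rfl⟩
      exact ⟨Submodule.Quotient.mk x', by simp⟩
    · rintro ⟨q, rfl⟩
      obtain ⟨x', rfl⟩ := Submodule.Quotient.mk_surjective _ q
      exact ⟨x', by simp⟩
  rw [heq]
  exact ((LinearMap.ker φ).liftQ (T : X →ₗ[ℂ] Y) hker).finiteDimensional_range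
end
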